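/- The solution operator S(z₁; z₀) of the first-order system associated to Bessel's equation of order 0 — namely d/dz (f₁, f₂) = (f₂, −f₁ − f₂/z) — has ℓ²→ℓ² operator norm bounded by max{z₀/z₁, 1} for all z₀, z₁ > 0. -/

import Mathlib

theorem stmt_9 (z₀ z₁ : ℝ) (hz₀ : 0 < z₀) (hz₁ : 0 < z₁)
    (f f' f'' : ℝ → ℝ)
    (hf : ∀ z, 0 < z → HasDerivAt f (f' z) z)
    (hf' : ∀ z, 0 < z → HasDerivAt f' (f'' z) z)
    (heq : ∀ z, 0 < z → f'' z + f' z / z + f z = 0) :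
    Real.sqrt (f z₁ ^ 2 + f' z₁ ^ 2) ≤
      max (z₀ / z₁) 1 * Real.sqrt (f z₀ ^ 2 + f' z₀ ^ 2) := by
  set E : ℝ → ℝ := fun z => f z ^ 2 + f' z ^ 2 with hE
  have hEnn : ∀ z, 0 ≤ E z := fun z => by positivity
  have hED : ∀ z, 0 < z → HasDerivAt E (-2 * f' z ^ 2 / z) z := by
    intro z hz
    have h := ((hf z hz).fun_pow 2).add ((hf' z hz).fun_pow 2)
    have hf''z : f'' z = -(f' z / z) - f z := by have := heq z hz; linarith
    refine HasDerivAt.congr_deriv h ?_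
    rw [hf''z]
    field_simp
    ring
  have hcE : ∀ z, 0 < z → ContinuousAt E z := fun z hz => (hED z hz).continuousAt
  rcases le_or_gt z₀ z₁ with hle | hlt
  · -- E antitone
    have hanti : AntitoneOn E (Set.Icc z₀ z₁) := by
      apply antitoneOn_of_deriv_nonpos (convex_Icc _ _)
      · intro z hz
        exact (hcE z (lt_of_lt_of_le hz₀ hz.1)).continuousWithinAt
      · intro z hz
        rw [interior_Icc] at hz
        exact (hED z (lt_trans hz₀ hz.1)).differentiableAt.differentiableWithinAt
      · intro z hz
        rw [interior_Icc] at hz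
        have hzpos : 0 < z := lt_trans hz₀ hz.1
        rw [(hED z hzpos).deriv]
        have h : -2 * f' z ^ 2 / z = -(2 * (f' z ^ 2 / z)) := by ring
        rw [h, neg_nonpos]
        positivity
    have h1 : E z₁ ≤ E z₀ := hanti (Set.left_mem_Icc.2 hle) (Set.right_mem_Icc.2 hle) hle
    calc Real.sqrt (E z₁) ≤ Real.sqrt (E z₀) := Real.sqrt_le_sqrt h1
      _ = 1 * Real.sqrt (E z₀) := (one_mul _).symm
      _ ≤ max (z₀ / z₁) 1 * Real.sqrt (E z₀) := by
          apply mul_le_mul_of_nonneg_right (le_max_right _ _) (Real.sqrt_nonneg _)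
  · -- z₁ < z₀ : G z = z^2 * E z is monotone
    set G : ℝ → ℝ := fun z => z ^ 2 * E z with hG
    have hGD : ∀ z, 0 < z → HasDerivAt G (2 * z * f z ^ 2) z := by
      intro z hz
      have h := (hasDerivAt_pow 2 z).mul (hED z hz)
      refine HasDerivAt.congr_deriv h ?_
      simp only [hE]
      field_simp
      ring
    have hmono : MonotoneOn G (Set.Icc z₁ z₀) := by
      apply monotoneOn_of_deriv_nonneg (convex_Icc _ _)
      · intro z hz
        exact ((hGD z (lt_of_lt_of_le hz₁ hz.1)).continuousAt).continuousWithinAt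
      · intro z hz
        rw [interior_Icc] at hz
        exact (hGD z (lt_trans hz₁ hz.1)).differentiableAt.differentiableWithinAt
      · intro z hz
        rw [interior_Icc] at hz
        have hzpos : 0 < z := lt_trans hz₁ hz.1
        rw [(hGD z hzpos).deriv]
        positivity
    have h1 : G z₁ ≤ G z₀ :=
      hmono (Set.left_mem_Icc.2 hlt.le) (Set.right_mem_Icc.2 hlt.le) hlt.le
    have h2 : E z₁ ≤ (z₀ / z₁) ^ 2 * E z₀ := by
      have : z₁ ^ 2 * E z₁ ≤ z₀ ^ 2 * E z₀ := h1
      have hz₁2 : (0:ℝ) < z₁ ^ 2 := by positivity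
      rw [div_pow, div_mul_eq_mul_div, le_div_iff₀ hz₁2]
      nlinarith
    calc Real.sqrt (E z₁) ≤ Real.sqrt ((z₀ / z₁) ^ 2 * E z₀) := Real.sqrt_le_sqrt h2
      _ = (z₀ / z₁) * Real.sqrt (E z₀) := by
          rw [Real.sqrt_mul (by positivity), Real.sqrt_sq (by positivity)]
      _ ≤ max (z₀ / z₁) 1 * Real.sqrt (E z₀) :=
          mul_le_mul_of_nonneg_right (le_max_left _ _) (Real.sqrt_nonneg _)
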